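/- Let (𝒰, ℰ) be a K-fat model of a graph J in a graph G with K ≥ 5, and for each vertex i of J let U'_i := B_G(U_i, 2) and let each branch path E'_{ij} be a U'_i–U'_j subpath of E_{ij}. Then (𝒰', ℰ') is a (K−4)-fat model of J in G. -/
import Mathlib


open SimpleGraph

/-- A `K`-fat model `(𝒰, ℰ)` of a graph `J` in a graph `G`: pairwise disjoint connected
branch sets `U x` for the vertices `x` of `J`, and for each edge `xy` of `J` a branch
path `E x y` (recorded via its vertex set, realized by a path of `G` from `U x` to `U y`
meeting `U x` and `U y` only in its endvertices), such that branch paths avoid the branch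
sets of non-incident vertices, distinct branch paths are internally disjoint, and any two
distinct members of `𝒰 ∪ ℰ` have distance at least `K` in `G`, except for a branch path
and a branch set of one of the endvertices of the corresponding edge. -/
structure FatModel {α β : Type*} (J : SimpleGraph α) (G : SimpleGraph β) (K : ℕ) where
  U : α → Set β
  conn : ∀ x, (G.induce (U x)).Connected
  disj : ∀ x y, x ≠ y → Disjoint (U x) (U y)
  E : α → α → Set β
  Esymm : ∀ x y, E x y = E y x
  path : ∀ ⦃x y⦄, J.Adj x y →
    ∃ (a b : β) (p : G.Walk a b), p.IsPath ∧ a ∈ U x ∧ b ∈ U y ∧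
      E x y = {v | v ∈ p.support} ∧
      (∀ v ∈ p.support, v ∈ U x → v = a) ∧
      (∀ v ∈ p.support, v ∈ U y → v = b)
  path_disj : ∀ ⦃x y⦄, J.Adj x y → ∀ z, z ≠ x → z ≠ y → Disjoint (E x y) (U z)
  paths_int_disj : ∀ ⦃x y x' y'⦄, J.Adj x y → J.Adj x' y' → s(x, y) ≠ s(x', y') →
    ∀ v, v ∈ E x y → v ∈ E x' y' → v ∈ (U x ∪ U y) ∩ (U x' ∪ U y')
  fat_UU : ∀ x y, x ≠ y → ∀ u ∈ U x, ∀ w ∈ U y, K ≤ G.dist u w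
  fat_UE : ∀ ⦃x y⦄, J.Adj x y → ∀ z, z ≠ x → z ≠ y → ∀ u ∈ E x y, ∀ w ∈ U z, K ≤ G.dist u w
  fat_EE : ∀ ⦃x y x' y'⦄, J.Adj x y → J.Adj x' y' → s(x, y) ≠ s(x', y') →
    ∀ u ∈ E x y, ∀ w ∈ E x' y', K ≤ G.dist u w


section Aux

variable {α β : Type*} {J : SimpleGraph α} {G : SimpleGraph β} {K : ℕ}

private lemma dist_tri {u v w : β} (h1 : G.Reachable u v) (h2 : G.Reachable v w) :
    G.dist u w ≤ G.dist u v + G.dist v w := by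
  obtain ⟨p, hp⟩ := h1.exists_walk_length_eq_dist
  obtain ⟨q, hq⟩ := h2.exists_walk_length_eq_dist
  calc G.dist u w ≤ (p.append q).length := SimpleGraph.dist_le _
    _ = _ := by rw [Walk.length_append, hp, hq]

private lemma takeUntilSet {T : Set β} :
    ∀ {a b : β} (p : G.Walk a b), b ∈ T →
      ∃ c ∈ T, ∃ (q : G.Walk a c) (r : G.Walk c b), p = q.append r ∧
        ∀ v ∈ q.support, v ∈ T → v = c := by
  intro a b p
  induction p with
  | nil => exact fun hb => ⟨_, hb, .nil, .nil, rfl, fun v hv _ => by simpa using hv⟩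
  | @cons u v' w h p' ih =>
    intro hb
    by_cases ha : u ∈ T
    · exact ⟨u, ha, .nil, .cons h p', rfl, fun v hv _ => by simpa using hv⟩
    · obtain ⟨c, hc, q, r, hpr, hq⟩ := ih hb
      refine ⟨c, hc, .cons h q, r, by rw [Walk.cons_append, hpr], ?_⟩
      intro x hx hxT
      simp only [Walk.support_cons, List.mem_cons] at hx
      rcases hx with rfl | hx
      · exact absurd hxT ha
      · exact hq x hx hxT

private lemma reach_induce {S : Set β} :
    ∀ {u v : β} (p : G.Walk u v) (hS : ∀ w ∈ p.support, w ∈ S),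
      (G.induce S).Reachable ⟨u, hS u p.start_mem_support⟩ ⟨v, hS v p.end_mem_support⟩ := by
  intro u v p
  induction p with
  | nil => exact fun _ => Reachable.refl _
  | @cons u v' w h p' ih =>
    intro hS
    have hS' : ∀ w ∈ p'.support, w ∈ S := fun w hw => hS w (by simp [hw])
    have hadj : (G.induce S).Adj ⟨u, hS u (by simp)⟩ ⟨v', hS' v' p'.start_mem_support⟩ := by
      simpa using h
    exact hadj.reachable.trans (ih hS')

end Aux

section Ball

variable {α β : Type*} {J : SimpleGraph α} {G : SimpleGraph β} {K : ℕ}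

/-- The ball of radius 2 around a branch set. -/
def ball2 (M : FatModel J G K) (x : α) : Set β :=
  {v : β | ∃ u ∈ M.U x, ∃ p : G.Walk u v, p.length ≤ 2}

lemma U_subset_ball2 (M : FatModel J G K) (x : α) : M.U x ⊆ ball2 M x :=
  fun v hv => ⟨v, hv, .nil, by simp⟩

lemma ball2_dist {M : FatModel J G K} {x : α} {v : β} (hv : v ∈ ball2 M x) :
    ∃ u ∈ M.U x, G.Reachable u v ∧ G.dist u v ≤ 2 := by
  obtain ⟨u, hu, p, hp⟩ := hv
  exact ⟨u, hu, ⟨p⟩, le_trans (dist_le p) hp⟩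

private lemma dist_lower {u w u' w' : β} (hK : 5 ≤ K) (hd : K ≤ G.dist u w)
    (h1 : G.Reachable u u') (h2 : G.Reachable w w')
    (e1 : G.dist u u' ≤ 2) (e2 : G.dist w w' ≤ 2) : K - 4 ≤ G.dist u' w' := by
  have hr : G.Reachable u w := Reachable.of_dist_ne_zero (by omega)
  have r2 : G.Reachable u' w := h1.symm.trans hr
  have r3 : G.Reachable u' w' := r2.trans h2
  have t1 : G.dist u w ≤ G.dist u u' + G.dist u' w := dist_tri h1 r2
  have t2 : G.dist u' w ≤ G.dist u' w' + G.dist w' w := dist_tri r3 (r3.symm.trans r2)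
  have hc : G.dist w' w = G.dist w w' := dist_comm
  omega

lemma ball2_disj (M : FatModel J G K) (hK : 5 ≤ K) (x y : α) (hxy : x ≠ y) :
    Disjoint (ball2 M x) (ball2 M y) := by
  rw [Set.disjoint_left]
  rintro v hvx hvy
  obtain ⟨u0, hu0, r1, d1⟩ := ball2_dist hvx
  obtain ⟨w0, hw0, r2, d2⟩ := ball2_dist hvy
  have hd : K ≤ G.dist u0 w0 := M.fat_UU x y hxy u0 hu0 w0 hw0
  have t1 : G.dist u0 w0 ≤ G.dist u0 v + G.dist v w0 := dist_tri r1 r2.symm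
  have hc : G.dist v w0 = G.dist w0 v := dist_comm
  omega

lemma ball2_conn (M : FatModel J G K) (x : α) : (G.induce (ball2 M x)).Connected := by
  classical
  obtain ⟨hpre, ⟨⟨u0, hu0⟩⟩⟩ := (connected_iff _).mp (M.conn x)
  refine (connected_iff _).mpr ⟨?_, ⟨⟨u0, U_subset_ball2 M x hu0⟩⟩⟩
  rintro ⟨v1, hv1⟩ ⟨v2, hv2⟩
  obtain ⟨u1, hu1, p1, hp1⟩ := hv1
  obtain ⟨u2, hu2, p2, hp2⟩ := hv2
  have hs1 : ∀ w ∈ p1.support, w ∈ ball2 M x := fun w hw =>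
    ⟨u1, hu1, p1.takeUntil w hw, le_trans (Walk.length_takeUntil_le p1 hw) hp1⟩
  have hs2 : ∀ w ∈ p2.support, w ∈ ball2 M x := fun w hw =>
    ⟨u2, hu2, p2.takeUntil w hw, le_trans (Walk.length_takeUntil_le p2 hw) hp2⟩
  have r1 := reach_induce p1 hs1
  have r2 := reach_induce p2 hs2
  have mid : (G.induce (ball2 M x)).Reachable ⟨u1, U_subset_ball2 M x hu1⟩
      ⟨u2, U_subset_ball2 M x hu2⟩ :=
    (hpre ⟨u1, hu1⟩ ⟨u2, hu2⟩).map (G.induceHomOfLE (U_subset_ball2 M x)).toHom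
  exact (r1.symm.trans mid).trans r2

end Ball

section Good

variable {α β : Type*} {J : SimpleGraph α} {G : SimpleGraph β} {K : ℕ}

/-- A suitable replacement branch path (recorded by its vertex set) for the edge `xy`. -/
def Good (M : FatModel J G K) (x y : α) (S : Set β) : Prop :=
  S ⊆ M.E x y ∧ ∃ (a b : β) (p : G.Walk a b), p.IsPath ∧ a ∈ ball2 M x ∧ b ∈ ball2 M y ∧
    S = {v | v ∈ p.support} ∧ (∀ v ∈ p.support, v ∈ ball2 M x → v = a) ∧
    (∀ v ∈ p.support, v ∈ ball2 M y → v = b)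

lemma good_symm {M : FatModel J G K} {x y : α} {S : Set β} (h : Good M x y S) :
    Good M y x S := by
  obtain ⟨hsub, a, b, p, hp, ha, hb, hS, hA, hB⟩ := h
  refine ⟨M.Esymm x y ▸ hsub, b, a, p.reverse, hp.reverse, hb, ha, ?_, ?_, ?_⟩
  · rw [hS]; ext v; simp [Walk.support_reverse]
  · intro v hv hvy; exact hB v (by simpa [Walk.support_reverse] using hv) hvy
  · intro v hv hvx; exact hA v (by simpa [Walk.support_reverse] using hv) hvx

lemma good_congr {M : FatModel J G K} {x y x' y' : α} {S : Set β}
    (h1 : x = x') (h2 : y = y') (h : Good M x y S) : Good M x' y' S := by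
  subst h1; subst h2; exact h

lemma exists_good (M : FatModel J G K) {x y : α} (h : J.Adj x y) : ∃ S, Good M x y S := by
  obtain ⟨a, b, p, hp, ha, hb, hE, _, _⟩ := M.path h
  obtain ⟨c, hc, q, r, hqr, hq⟩ := takeUntilSet p.reverse (U_subset_ball2 M x ha)
  obtain ⟨d, hd, q2, r2, hqr2, hq2⟩ := takeUntilSet q.reverse (U_subset_ball2 M y hb)
  have hq_sub : ∀ v ∈ q.support, v ∈ p.support := by
    intro v hv
    have : v ∈ p.reverse.support := by
      rw [hqr, Walk.support_append]; exact List.mem_append_left _ hv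
    simpa [Walk.support_reverse] using this
  have hq2_sub : ∀ v ∈ q2.support, v ∈ q.support := by
    intro v hv
    have : v ∈ q.reverse.support := by
      rw [hqr2, Walk.support_append]; exact List.mem_append_left _ hv
    simpa [Walk.support_reverse] using this
  refine ⟨{v | v ∈ q2.support}, ?_, c, d, q2, ?_, hc, hd, rfl, ?_, ?_⟩
  · intro v hv
    rw [hE]
    exact hq_sub _ (hq2_sub _ hv)
  · have h1 : q.IsPath := Walk.IsPath.of_append_left (hqr ▸ hp.reverse)
    exact Walk.IsPath.of_append_left (hqr2 ▸ h1.reverse)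
  · exact fun v hv hvx => hq v (hq2_sub v hv) hvx
  · exact fun v hv hvy => hq2 v hv hvy

open Classical in
/-- Choice of a replacement branch path, made symmetric via `Sym2`. -/
noncomputable def goodSet (M : FatModel J G K) : Sym2 α → Set β := fun e =>
  if h : J.Adj e.out.1 e.out.2 then (exists_good M h).choose else ∅

lemma goodSet_spec (M : FatModel J G K) {x y : α} (h : J.Adj x y) :
    Good M x y (goodSet M s(x, y)) := by
  classical
  have hout : s((s(x, y) : Sym2 α).out.1, (s(x, y) : Sym2 α).out.2) = s(x, y) :=
    Quot.out_eq _
  obtain ⟨h1, h2⟩ | ⟨h1, h2⟩ := Sym2.eq_iff.mp hout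
  · have hadj : J.Adj (s(x, y) : Sym2 α).out.1 (s(x, y) : Sym2 α).out.2 := by
      rw [h1, h2]; exact h
    have heq : goodSet M s(x, y) = (exists_good M hadj).choose := by
      simp only [goodSet]; rw [dif_pos hadj]
    rw [heq]
    exact good_congr h1 h2 (exists_good M hadj).choose_spec
  · have hadj : J.Adj (s(x, y) : Sym2 α).out.1 (s(x, y) : Sym2 α).out.2 := by
      rw [h1, h2]; exact h.symm
    have heq : goodSet M s(x, y) = (exists_good M hadj).choose := by
      simp only [goodSet]; rw [dif_pos hadj]
    rw [heq]
    exact good_symm (good_congr h1 h2 (exists_good M hadj).choose_spec)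

end Good

/-- `J` is a `K`-fat minor of `G` if `G` contains a `K`-fat model of `J`. -/
def IsFatMinor {α β : Type*} (G : SimpleGraph β) (J : SimpleGraph α) (K : ℕ) : Prop :=
  Nonempty (FatModel J G K)

/-- Fattening the branch sets: if `(𝒰, ℰ)` is a `K`-fat model of `J` in `G` with `K ≥ 5`,
then replacing each branch set `U i` by the ball `B_G(U i, 2)` and each branch path by a
suitable subpath of the original one yields a `(K − 4)`-fat model of `J` in `G`. -/
theorem stmt17 {α β : Type*} (J : SimpleGraph α) (G : SimpleGraph β) (K : ℕ) (hK : 5 ≤ K)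
    (M : FatModel J G K) :
    ∃ M' : FatModel J G (K - 4),
      (∀ i, M'.U i = {v : β | ∃ u ∈ M.U i, ∃ p : G.Walk u v, p.length ≤ 2}) ∧
      ∀ ⦃x y⦄, J.Adj x y → M'.E x y ⊆ M.E x y := by
  refine ⟨{
    U := ball2 M
    conn := ball2_conn M
    disj := ball2_disj M hK
    E := fun x y => goodSet M s(x, y)
    Esymm := fun x y => by show goodSet M s(x, y) = goodSet M s(y, x); rw [Sym2.eq_swap]
    path := fun x y h => (goodSet_spec M h).2
    path_disj := ?_
    paths_int_disj := ?_
    fat_UU := ?_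
    fat_UE := ?_
    fat_EE := ?_ }, fun i => rfl, fun x y h => (goodSet_spec M h).1⟩
  · intro x y h z hzx hzy
    rw [Set.disjoint_left]
    intro v hvE hvB
    obtain ⟨w0, hw0, r, d⟩ := ball2_dist hvB
    have hd : K ≤ G.dist v w0 := M.fat_UE h z hzx hzy v ((goodSet_spec M h).1 hvE) w0 hw0
    have hc : G.dist v w0 = G.dist w0 v := dist_comm
    omega
  · intro x y x' y' h h' hne v hv hv'
    have hd : K ≤ G.dist v v :=
      M.fat_EE h h' hne v ((goodSet_spec M h).1 hv) v ((goodSet_spec M h').1 hv')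
    rw [SimpleGraph.dist_self] at hd
    omega
  · intro x y hxy u hu w hw
    obtain ⟨u0, hu0, r1, d1⟩ := ball2_dist hu
    obtain ⟨w0, hw0, r2, d2⟩ := ball2_dist hw
    exact dist_lower hK (M.fat_UU x y hxy u0 hu0 w0 hw0) r1 r2 d1 d2
  · intro x y h z hzx hzy u hu w hw
    obtain ⟨w0, hw0, r, d⟩ := ball2_dist hw
    exact dist_lower hK (M.fat_UE h z hzx hzy u ((goodSet_spec M h).1 hu) w0 hw0)
      (Reachable.refl u) r (by rw [SimpleGraph.dist_self]; omega) d
  · intro x y x' y' h h' hne u hu w hw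
    exact le_trans (Nat.sub_le K 4)
      (M.fat_EE h h' hne u ((goodSet_spec M h).1 hu) w ((goodSet_spec M h').1 hw))
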